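/- Let A be a real square matrix and P a real square matrix with nonnegative entries. If ψ(A) + P is Hurwitz, then ψ(A) is Hurwitz. -/

import Mathlib

noncomputable def metzlerPart {n : ℕ} (A : Matrix (Fin n) (Fin n) ℝ) : Matrix (Fin n) (Fin n) ℝ :=
  Matrix.of fun i j => if i = j then A i j else |A i j|

def Hurwitz {n : ℕ} (A : Matrix (Fin n) (Fin n) ℝ) : Prop :=
  ∀ μ ∈ spectrum ℂ (A.map (Complex.ofReal)), μ.re < 0

section Aux

open Matrix Filter Topology


attribute [local instance] Matrix.linftyOpNormedRing Matrix.linftyOpNormedAlgebra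

variable {n : ℕ}

local notation "Mat" => Matrix (Fin n) (Fin n) ℝ

noncomputable example : CompleteSpace Mat := by infer_instance
noncomputable example : NormedRing Mat := by infer_instance
noncomputable example : HasSummableGeomSeries Mat := by infer_instance

/-- entrywise nonneg -/
def Mnn (X : Mat) : Prop := ∀ i j, 0 ≤ X i j

lemma Mnn.mul {X Y : Mat} (hX : Mnn X) (hY : Mnn Y) : Mnn (X * Y) := fun i j => by
  rw [Matrix.mul_apply]
  exact Finset.sum_nonneg fun k _ => mul_nonneg (hX i k) (hY k j)

lemma Mnn.pow {X : Mat} (hX : Mnn X) (k : ℕ) : Mnn (X ^ k) := by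
  induction k with
  | zero => intro i j; simp [Matrix.one_apply]; positivity
  | succ k ih => rw [pow_succ]; exact ih.mul hX

lemma Mnn.smul {c : ℝ} (hc : 0 ≤ c) {X : Mat} (hX : Mnn X) : Mnn (c • X) := fun i j =>
  mul_nonneg hc (hX i j)

lemma entry_abs_le_norm (X : Mat) (i j : Fin n) : |X i j| ≤ ‖X‖ := by
  have h1 : ‖X i j‖₊ ≤ ∑ j', ‖X i j'‖₊ :=
    Finset.single_le_sum (f := fun j' => ‖X i j'‖₊) (fun _ _ => zero_le) (Finset.mem_univ j)
  have h2 : (∑ j', ‖X i j'‖₊) ≤ Finset.univ.sup fun i => ∑ j', ‖X i j'‖₊ :=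
    Finset.le_sup (f := fun i => ∑ j', ‖X i j'‖₊) (Finset.mem_univ i)
  have := Matrix.linfty_opNNNorm_def X
  have h3 : ‖X i j‖₊ ≤ ‖X‖₊ := by rw [this]; exact h1.trans h2
  simpa [Real.norm_eq_abs] using (NNReal.coe_le_coe.mpr h3 : ‖X i j‖ ≤ ‖X‖)

lemma tendsto_entry {α : Type*} {l : Filter α} {f : α → Mat} {X : Mat}
    (hf : Tendsto f l (𝓝 X)) (i j : Fin n) :
    Tendsto (fun t => f t i j) l (𝓝 (X i j)) := by
  exact ((continuous_id.matrix_elem i j).tendsto X).comp hf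

lemma hasSum_entry {f : ℕ → Mat} {X : Mat} (hf : HasSum f X) (i j : Fin n) :
    HasSum (fun k => f k i j) (X i j) := by
  have := tendsto_entry hf i j
  simpa [HasSum, Matrix.sum_apply] using this

lemma Mnn.hasSum {f : ℕ → Mat} {X : Mat} (hf : HasSum f X) (h : ∀ k, Mnn (f k)) : Mnn X :=
  fun i j => hasSum_le (fun k => h k i j) hasSum_zero (hasSum_entry hf i j)

lemma ringInverse_eq {a b : Mat} (h1 : a * b = 1) (h2 : b * a = 1) : Ring.inverse a = b :=
  Ring.inverse_unit (⟨a, b, h1, h2⟩ : Matˣ)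

lemma Mnn.geom {t : Mat} (ht : ‖t‖ < 1) (h : Mnn t) : Mnn (∑' k : ℕ, t ^ k) :=
  Mnn.hasSum (summable_geometric_of_norm_lt_one ht).hasSum fun k => h.pow k

/-- Neumann series base case: for large `s`, the resolvent of a Metzler matrix is nonneg. -/
lemma resolvent_nonneg_of_large {B : Mat} (hB : ∀ i j, i ≠ j → 0 ≤ B i j) :
    ∃ T : ℝ, 0 ≤ T ∧ ∀ s : ℝ, T ≤ s → Mnn (Ring.inverse (s • (1 : Mat) - B)) := by
  set c : ℝ := 1 + ∑ i, ∑ j, |B i j| with hc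
  have hc1 : 1 ≤ c := by
    have : (0:ℝ) ≤ ∑ i, ∑ j, |B i j| :=
      Finset.sum_nonneg fun i _ => Finset.sum_nonneg fun j _ => abs_nonneg _
    linarith
  set N : Mat := B + c • (1 : Mat) with hN
  have hNnn : Mnn N := by
    intro i j
    rcases eq_or_ne i j with rfl | hij
    · have hle : |B i i| ≤ ∑ i', ∑ j', |B i' j'| := by
        calc |B i i| ≤ ∑ j', |B i j'| :=
              Finset.single_le_sum (f := fun j' => |B i j'|) (fun _ _ => abs_nonneg _)
                (Finset.mem_univ i)
        _ ≤ ∑ i', ∑ j', |B i' j'| :=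
              Finset.single_le_sum (f := fun i' => ∑ j', |B i' j'|)
                (fun _ _ => Finset.sum_nonneg fun _ _ => abs_nonneg _) (Finset.mem_univ i)
      have : -B i i ≤ |B i i| := neg_le_abs _
      simp only [hN, Matrix.add_apply, Matrix.smul_apply, Matrix.one_apply_eq, smul_eq_mul,
        mul_one]
      linarith
    · simpa [hN, Matrix.one_apply, hij] using hB i j hij
  refine ⟨max 0 ‖N‖, le_max_left _ _, fun s hs => ?_⟩
  have hs0 : 0 ≤ s := le_trans (le_max_left _ _) hs
  have hsN : ‖N‖ ≤ s := le_trans (le_max_right _ _) hs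
  have hsc : 0 < s + c := by linarith
  set t : Mat := (s + c)⁻¹ • N with hT
  have htn : ‖t‖ < 1 := by
    rw [hT, norm_smul, Real.norm_eq_abs, abs_of_pos (inv_pos.mpr hsc)]
    rw [inv_mul_lt_iff₀ hsc, mul_one]
    linarith
  have htnn : Mnn t := hNnn.smul (le_of_lt (inv_pos.mpr hsc))
  have key : (s • (1 : Mat) - B) = ((s + c) • (1 : Mat)) * (1 - t) := by
    rw [Matrix.smul_mul, one_mul, smul_sub, hT, smul_smul, mul_inv_cancel₀ (ne_of_gt hsc),
      one_smul, hN]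
    module
  have hinv : Ring.inverse (s • (1 : Mat) - B) = (s + c)⁻¹ • ∑' k : ℕ, t ^ k := by
    refine ringInverse_eq ?_ ?_
    · rw [key]
      simp only [smul_mul_assoc, mul_smul_comm, one_mul, smul_smul]
      rw [inv_mul_cancel₀ (ne_of_gt hsc), one_smul]; exact mul_neg_geom_series t htn
    · rw [key]
      simp only [smul_mul_assoc, mul_smul_comm, one_mul, smul_smul]
      rw [mul_inv_cancel₀ (ne_of_gt hsc), one_smul]; exact geom_series_mul_neg t htn
  rw [hinv]
  exact (Mnn.geom htn htnn).smul (le_of_lt (inv_pos.mpr hsc))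

lemma resolvent_nonneg_step {B : Mat} {s₀ s : ℝ} (hs : 0 ≤ s) (hss : s ≤ s₀)
    (hU : IsUnit (s₀ • (1 : Mat) - B))
    (hR : Mnn (Ring.inverse (s₀ • (1 : Mat) - B)))
    (hsmall : (s₀ - s) * ‖Ring.inverse (s₀ • (1 : Mat) - B)‖ < 1) :
    Mnn (Ring.inverse (s • (1 : Mat) - B)) := by
  set R₀ := Ring.inverse (s₀ • (1 : Mat) - B) with hR₀
  set E : Mat := (s₀ - s) • R₀ with hEdef
  have hE : ‖E‖ < 1 := by
    rw [hEdef, norm_smul, Real.norm_eq_abs, abs_of_nonneg (by linarith)]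
    exact hsmall
  have hD0R : (s₀ • (1 : Mat) - B) * R₀ = 1 := Ring.mul_inverse_cancel _ hU
  have hRD0 : R₀ * (s₀ • (1 : Mat) - B) = 1 := Ring.inverse_mul_cancel _ hU
  have key1 : s • (1 : Mat) - B = (s₀ • (1 : Mat) - B) * (1 - E) := by
    rw [mul_sub, mul_one, hEdef, mul_smul_comm, hD0R]
    module
  have key2 : s • (1 : Mat) - B = (1 - E) * (s₀ • (1 : Mat) - B) := by
    rw [sub_mul, one_mul, hEdef, smul_mul_assoc, hRD0]
    module
  set G : Mat := ∑' k : ℕ, E ^ k with hGdef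
  have hGE : (1 - E) * G = 1 := mul_neg_geom_series E hE
  have hEG : G * (1 - E) = 1 := geom_series_mul_neg E hE
  have hcomm : R₀ * (1 - E) = (1 - E) * R₀ := by
    simp only [mul_sub, sub_mul, mul_one, one_mul, hEdef, mul_smul_comm, smul_mul_assoc]
  have hinv : Ring.inverse (s • (1 : Mat) - B) = G * R₀ := by
    refine ringInverse_eq ?_ ?_
    · rw [key1, mul_assoc, ← mul_assoc (1 - E), hGE, one_mul, hD0R]
    · rw [key2, mul_assoc G R₀, ← mul_assoc R₀, hcomm, mul_assoc, hRD0, mul_one, hEG]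
  rw [hinv]
  have hEnn : Mnn E := hR.smul (by linarith)
  exact (Mnn.geom hE hEnn).mul hR

lemma resolvent_nonneg_all {B : Mat} (hB : ∀ i j, i ≠ j → 0 ≤ B i j)
    (hU : ∀ s : ℝ, 0 ≤ s → IsUnit (s • (1 : Mat) - B)) :
    ∀ s : ℝ, 0 ≤ s → Mnn (Ring.inverse (s • (1 : Mat) - B)) := by
  obtain ⟨T, hT0, hT⟩ := resolvent_nonneg_of_large hB
  set Rm : ℝ → Mat := fun s => Ring.inverse (s • (1 : Mat) - B) with hRm
  have hcont : ∀ s₀ : ℝ, 0 ≤ s₀ → ContinuousAt Rm s₀ := by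
    intro s₀ hs₀
    obtain ⟨u, hu⟩ := hU s₀ hs₀
    have h1 : ContinuousAt (fun s : ℝ => s • (1 : Mat) - B) s₀ :=
      ((continuous_id.smul continuous_const).sub continuous_const).continuousAt
    have h2 : ContinuousAt Ring.inverse (s₀ • (1 : Mat) - B) := by
      rw [← hu]; exact NormedRing.inverse_continuousAt u
    exact ContinuousAt.comp (g := Ring.inverse) (f := fun s : ℝ => s • (1 : Mat) - B) h2 h1
  set S : Set ℝ := {s : ℝ | 0 ≤ s ∧ ∀ u : ℝ, s ≤ u → Mnn (Rm u)} with hS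
  have hTS : T ∈ S := ⟨hT0, fun u hu => hT u hu⟩
  have hbdd : BddBelow S := ⟨0, fun x hx => hx.1⟩
  set m := sInf S with hm
  have hm0 : 0 ≤ m := le_csInf ⟨T, hTS⟩ fun x hx => hx.1
  have hgt : ∀ u : ℝ, m < u → Mnn (Rm u) := by
    intro u hu
    obtain ⟨a, haS, hau⟩ := exists_lt_of_csInf_lt ⟨T, hTS⟩ hu
    exact haS.2 u (le_of_lt hau)
  have hmem : Mnn (Rm m) := by
    intro i j
    have htend : Tendsto (fun u => Rm u i j) (𝓝[>] m) (𝓝 (Rm m i j)) :=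
      tendsto_entry ((hcont m hm0).tendsto.mono_left nhdsWithin_le_nhds) i j
    refine ge_of_tendsto htend ?_
    filter_upwards [self_mem_nhdsWithin] with u hu
    exact hgt u hu i j
  have hmS : m ∈ S :=
    ⟨hm0, fun u hu => hu.lt_or_eq.elim (fun h => hgt u h) (fun h => h ▸ hmem)⟩
  have hmz : m ≤ 0 := by
    by_contra hpos
    push_neg at hpos
    set δ := min m (1 / (‖Rm m‖ + 1)) with hδ
    have hδpos : 0 < δ := lt_min hpos (by positivity)
    have hδm : δ ≤ m := min_le_left _ _
    have hδn : δ ≤ 1 / (‖Rm m‖ + 1) := min_le_right _ _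
    have hkey : 1 / (‖Rm m‖ + 1) * ‖Rm m‖ < 1 := by
      rw [div_mul_eq_mul_div, one_mul, div_lt_one (by positivity)]
      linarith
    have hs' : m - δ / 2 ∈ S := by
      constructor
      · linarith
      · intro u hu
        rcases le_or_gt m u with h | h
        · exact hmS.2 u h
        · refine resolvent_nonneg_step (by linarith) (le_of_lt h)
            (hU m (le_of_lt hpos)) hmem ?_
          have h1 : (m - u) * ‖Rm m‖ ≤ δ * ‖Rm m‖ :=
            mul_le_mul_of_nonneg_right (by linarith) (norm_nonneg _)
          have h2 : δ * ‖Rm m‖ ≤ 1 / (‖Rm m‖ + 1) * ‖Rm m‖ :=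
            mul_le_mul_of_nonneg_right hδn (norm_nonneg _)
          calc (m - u) * ‖Rm m‖ ≤ δ * ‖Rm m‖ := h1
          _ ≤ 1 / (‖Rm m‖ + 1) * ‖Rm m‖ := h2
          _ < 1 := hkey
    have := csInf_le hbdd hs'
    rw [← hm] at this
    linarith
  intro s hs
  have hms : m ≤ s := le_trans hmz hs
  exact hmS.2 s hms

lemma exists_eigenvector {C : Matrix (Fin n) (Fin n) ℂ} {μ : ℂ} (h : μ ∈ spectrum ℂ C) :
    ∃ v : Fin n → ℂ, v ≠ 0 ∧ C *ᵥ v = μ • v := by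
  rw [spectrum.mem_iff] at h
  rw [Matrix.isUnit_iff_isUnit_det, isUnit_iff_ne_zero, not_not] at h
  obtain ⟨v, hv0, hv⟩ := (Matrix.exists_mulVec_eq_zero_iff).mpr h
  refine ⟨v, hv0, ?_⟩
  have halg : (algebraMap ℂ (Matrix (Fin n) (Fin n) ℂ)) μ = μ • (1 : Matrix (Fin n) (Fin n) ℂ) := by
    ext i j
    simp [Matrix.algebraMap_matrix_apply, Matrix.smul_apply, Matrix.one_apply]
  rw [halg, Matrix.sub_mulVec, Matrix.smul_mulVec, Matrix.one_mulVec, sub_eq_zero] at hv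
  exact hv.symm

lemma exists_subeigenvector {M : Matrix (Fin n) (Fin n) ℝ} (hM : ∀ i j, i ≠ j → 0 ≤ M i j)
    {μ : ℂ} (hμ : μ ∈ spectrum ℂ (M.map Complex.ofReal)) :
    ∃ w : Fin n → ℝ, (∀ i, 0 ≤ w i) ∧ w ≠ 0 ∧ ∀ i, μ.re * w i ≤ (M *ᵥ w) i := by
  obtain ⟨v, hv0, hv⟩ := exists_eigenvector hμ
  set w : Fin n → ℝ := fun i => ‖v i‖ with hw
  have hwnn : ∀ i, 0 ≤ w i := fun i => norm_nonneg _
  refine ⟨w, hwnn, ?_, ?_⟩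
  · intro hcon
    apply hv0
    funext i
    have : w i = 0 := by rw [hcon]; rfl
    simpa [hw, norm_eq_zero] using this
  · intro i
    have hvi : ∑ j, (M i j : ℂ) * v j = μ * v i := by
      have := congrFun hv i
      simpa [Matrix.mulVec, Matrix.map_apply, dotProduct, Pi.smul_apply, smul_eq_mul] using this
    have hMw : (M *ᵥ w) i = ∑ j, M i j * w j := by
      simp [Matrix.mulVec, dotProduct]
    rcases (hwnn i).eq_or_lt with hz | hpos
    · rw [hMw, ← hz, mul_zero]
      refine Finset.sum_nonneg fun j _ => ?_
      rcases eq_or_ne j i with rfl | hij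
      · rw [← hz, mul_zero]
      · exact mul_nonneg (hM i j (Ne.symm hij)) (hwnn j)
    · have key : μ.re * (w i * w i) ≤ (∑ j, M i j * w j) * w i := by
        have h1 : μ * (v i * (starRingEnd ℂ) (v i)) =
            ∑ j, (M i j : ℂ) * (v j * (starRingEnd ℂ) (v i)) := by
          calc μ * (v i * (starRingEnd ℂ) (v i)) = (μ * v i) * (starRingEnd ℂ) (v i) := by ring
          _ = (∑ j, (M i j : ℂ) * v j) * (starRingEnd ℂ) (v i) := by rw [hvi]
          _ = ∑ j, (M i j : ℂ) * (v j * (starRingEnd ℂ) (v i)) := by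
                rw [Finset.sum_mul]; exact Finset.sum_congr rfl fun j _ => by ring
        have h2 : (μ * (v i * (starRingEnd ℂ) (v i))).re = μ.re * (w i * w i) := by
          rw [Complex.mul_conj]
          simp [Complex.mul_re, Complex.normSq_eq_norm_sq, hw, sq]
        have h3 : (∑ j, (M i j : ℂ) * (v j * (starRingEnd ℂ) (v i))).re =
            ∑ j, M i j * (v j * (starRingEnd ℂ) (v i)).re := by
          rw [Complex.re_sum]
          refine Finset.sum_congr rfl fun j _ => ?_
          simp [Complex.mul_re]
        have h4 : ∀ j, M i j * (v j * (starRingEnd ℂ) (v i)).re ≤ M i j * (w j * w i) := by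
          intro j
          rcases eq_or_ne j i with rfl | hij
          · rw [Complex.mul_conj]
            simp [Complex.normSq_eq_norm_sq, hw, sq]
          · refine mul_le_mul_of_nonneg_left ?_ (hM i j (Ne.symm hij))
            calc (v j * (starRingEnd ℂ) (v i)).re ≤ ‖v j * (starRingEnd ℂ) (v i)‖ :=
                  Complex.re_le_norm _
            _ = w j * w i := by rw [norm_mul, Complex.norm_conj]
        calc μ.re * (w i * w i) = (μ * (v i * (starRingEnd ℂ) (v i))).re := h2.symm
        _ = ∑ j, M i j * (v j * (starRingEnd ℂ) (v i)).re := by rw [h1, h3]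
        _ ≤ ∑ j, M i j * (w j * w i) := Finset.sum_le_sum fun j _ => h4 j
        _ = (∑ j, M i j * w j) * w i := by rw [Finset.sum_mul]; exact Finset.sum_congr rfl fun j _ => by ring
      rw [hMw]
      have key' : (μ.re * w i) * w i ≤ (∑ j, M i j * w j) * w i := by
        calc (μ.re * w i) * w i = μ.re * (w i * w i) := by ring
        _ ≤ _ := key
      exact le_of_mul_le_mul_right key' hpos


theorem metzlerPart_hurwitz_of_add_nonneg_hurwitz {n : ℕ}
    (A P : Matrix (Fin n) (Fin n) ℝ) (hP : ∀ i j, 0 ≤ P i j)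
    (h : Hurwitz (metzlerPart A + P)) : Hurwitz (metzlerPart A) := by
  intro μ hμ
  by_contra hre
  push_neg at hre
  set M := metzlerPart A with hMdef
  set B := metzlerPart A + P with hBdef
  have hMmet : ∀ i j, i ≠ j → 0 ≤ M i j := by
    intro i j hij
    simp only [hMdef, metzlerPart, Matrix.of_apply, if_neg hij]
    exact abs_nonneg _
  have hBmet : ∀ i j, i ≠ j → 0 ≤ B i j := by
    intro i j hij
    have h1 := hMmet i j hij
    have : B i j = M i j + P i j := by rw [hBdef, hMdef, Matrix.add_apply]
    rw [this]
    exact add_nonneg h1 (hP i j)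
  have hU : ∀ s : ℝ, 0 ≤ s → IsUnit (s • (1 : Matrix (Fin n) (Fin n) ℝ) - B) := by
    intro s hs
    rw [Matrix.isUnit_iff_isUnit_det, isUnit_iff_ne_zero]
    intro hdet
    have hmem : (s : ℂ) ∈ spectrum ℂ (B.map Complex.ofReal) := by
      rw [spectrum.mem_iff, Matrix.isUnit_iff_isUnit_det, isUnit_iff_ne_zero, not_not]
      have hmap : algebraMap ℂ (Matrix (Fin n) (Fin n) ℂ) (s : ℂ) - B.map Complex.ofReal
          = (s • (1 : Matrix (Fin n) (Fin n) ℝ) - B).map Complex.ofReal := by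
        ext i j
        simp [Matrix.algebraMap_matrix_apply, Matrix.map_apply, Matrix.sub_apply,
          Matrix.smul_apply, Matrix.one_apply, apply_ite]
      rw [hmap]
      have : ((s • (1 : Matrix (Fin n) (Fin n) ℝ) - B).map Complex.ofReal).det
          = Complex.ofRealHom ((s • (1 : Matrix (Fin n) (Fin n) ℝ) - B).det) :=
        (RingHom.map_det Complex.ofRealHom _).symm
      rw [this, hdet]
      simp
    have := h _ hmem
    simp only [Complex.ofReal_re] at this
    linarith
  obtain ⟨w, hwnn, hwne, hsub⟩ := exists_subeigenvector hMmet hμ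
  have hRnn := resolvent_nonneg_all hBmet hU μ.re hre
  set D := μ.re • (1 : Matrix (Fin n) (Fin n) ℝ) - B with hD
  have hDw : ∀ i, (D *ᵥ w) i ≤ 0 := by
    intro i
    have h1 : (D *ᵥ w) i = μ.re * w i - (B *ᵥ w) i := by
      rw [hD, Matrix.sub_mulVec, Matrix.smul_mulVec, Matrix.one_mulVec]
      simp [Pi.sub_apply, Pi.smul_apply, smul_eq_mul]
    have h2 : (M *ᵥ w) i ≤ (B *ᵥ w) i := by
      have hb : (B *ᵥ w) i = (M *ᵥ w) i + (P *ᵥ w) i := by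
        rw [hBdef, ← hMdef, Matrix.add_mulVec, Pi.add_apply]
      have hp : 0 ≤ (P *ᵥ w) i := by
        rw [Matrix.mulVec, dotProduct]
        exact Finset.sum_nonneg fun j _ => mul_nonneg (hP i j) (hwnn j)
      rw [hb]; linarith
    have h3 := hsub i
    rw [h1]; linarith
  have hcancel : Ring.inverse D * D = 1 := Ring.inverse_mul_cancel _ (hU μ.re hre)
  have hw_eq : w = Ring.inverse D *ᵥ (D *ᵥ w) := by
    rw [Matrix.mulVec_mulVec, hcancel, Matrix.one_mulVec]
  have hwle : ∀ i, w i ≤ 0 := by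
    intro i
    conv_lhs => rw [hw_eq]
    rw [Matrix.mulVec, dotProduct]
    exact Finset.sum_nonpos fun j _ =>
      mul_nonpos_iff.mpr (Or.inl ⟨hRnn i j, hDw j⟩)
  apply hwne
  funext i
  exact le_antisymm (hwle i) (hwnn i)

end Aux
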